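/- If W and V are homogeneous subgroups of H^n with H^n = WV and W ∩ V = {0}, then one of them is vertical (contains H_2) and the other is horizontal (contained in H_1). -/

import Mathlib

noncomputable section

open Filter Set
open scoped BigOperators Topology ENNReal

/-- The Heisenberg group product on `ℝ^{2n+1}` in symplectic coordinates. -/
def hmul (n : ℕ) (x y : Fin (2*n+1) → ℝ) : Fin (2*n+1) → ℝ := fun j =>
  x j + y j + (if (j : ℕ) = 2*n then
    (∑ i : Fin n, (x ⟨(i:ℕ), by omega⟩ * y ⟨(i:ℕ)+n, by omega⟩
      - x ⟨(i:ℕ)+n, by omega⟩ * y ⟨(i:ℕ), by omega⟩)) / 2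
  else 0)

/-- Intrinsic dilations of the Heisenberg group. -/
def hdil (n : ℕ) (t : ℝ) (x : Fin (2*n+1) → ℝ) : Fin (2*n+1) → ℝ := fun j =>
  if (j : ℕ) = 2*n then t^2 * x j else t * x j

/-- The horizontal layer `H_1`. -/
def H1set (n : ℕ) : Set (Fin (2*n+1) → ℝ) := {x | x ⟨2*n, by omega⟩ = 0}

/-- The vertical layer (center) `H_2`. -/
def H2set (n : ℕ) : Set (Fin (2*n+1) → ℝ) := {x | ∀ j : Fin (2*n+1), (j:ℕ) ≠ 2*n → x j = 0}

/-- A homogeneous distance on the Heisenberg group: a distance inducing the standard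
topology, left invariant and 1-homogeneous under dilations. -/
structure IsHomDist (n : ℕ) (d : (Fin (2*n+1) → ℝ) → (Fin (2*n+1) → ℝ) → ℝ) : Prop where
  eq_zero_iff : ∀ x y, d x y = 0 ↔ x = y
  symm : ∀ x y, d x y = d y x
  triangle : ∀ x y z, d x z ≤ d x y + d y z
  continuous : Continuous fun p : (Fin (2*n+1) → ℝ) × (Fin (2*n+1) → ℝ) => d p.1 p.2
  ball_mem_nhds : ∀ x : Fin (2*n+1) → ℝ, ∀ ε > (0:ℝ), {y | d x y < ε} ∈ nhds x
  leftInvariant : ∀ z x y, d (hmul n z x) (hmul n z y) = d x y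
  homogeneous : ∀ t > (0:ℝ), ∀ x y, d (hdil n t x) (hdil n t y) = t * d x y

/-- A homogeneous subgroup: a closed subgroup invariant under all dilations. -/
structure IsHomSubgroup (n : ℕ) (S : Set (Fin (2*n+1) → ℝ)) : Prop where
  zero_mem : (0 : Fin (2*n+1) → ℝ) ∈ S
  mul_mem : ∀ x ∈ S, ∀ y ∈ S, hmul n x y ∈ S
  neg_mem : ∀ x ∈ S, -x ∈ S
  dil_mem : ∀ t > (0:ℝ), ∀ x ∈ S, hdil n t x ∈ S
  closed : IsClosed S

/-- A vertical subgroup contains the center `H_2`. -/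
def IsVertical (n : ℕ) (S : Set (Fin (2*n+1) → ℝ)) : Prop := IsHomSubgroup n S ∧ H2set n ⊆ S

/-- A horizontal subgroup is contained in `H_1`. -/
def IsHorizontal (n : ℕ) (S : Set (Fin (2*n+1) → ℝ)) : Prop := IsHomSubgroup n S ∧ S ⊆ H1set n

/-- `H^n = W ⋊ V`. -/
def IsSemidirect (n : ℕ) (W V : Set (Fin (2*n+1) → ℝ)) : Prop :=
  (∀ x, ∃ w ∈ W, ∃ v ∈ V, x = hmul n w v) ∧ W ∩ V = {0}

/-- The bilinear (symplectic) form appearing in `hmul`. -/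
def bform (n : ℕ) (x y : Fin (2*n+1) → ℝ) : ℝ :=
  ∑ i : Fin n, (x ⟨(i:ℕ), by omega⟩ * y ⟨(i:ℕ)+n, by omega⟩
      - x ⟨(i:ℕ)+n, by omega⟩ * y ⟨(i:ℕ), by omega⟩)

lemma hmul_apply (n : ℕ) (x y : Fin (2*n+1) → ℝ) (j : Fin (2*n+1)) :
    hmul n x y j = x j + y j + (if (j : ℕ) = 2*n then bform n x y / 2 else 0) := rfl

lemma hdil_apply (n : ℕ) (t : ℝ) (x : Fin (2*n+1) → ℝ) (j : Fin (2*n+1)) :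
    hdil n t x j = if (j : ℕ) = 2*n then t^2 * x j else t * x j := rfl

lemma bform_congr {n : ℕ} {x x' y y' : Fin (2*n+1) → ℝ}
    (hx : ∀ j : Fin (2*n+1), (j:ℕ) ≠ 2*n → x j = x' j)
    (hy : ∀ j : Fin (2*n+1), (j:ℕ) ≠ 2*n → y j = y' j) :
    bform n x y = bform n x' y' := by
  unfold bform
  refine Finset.sum_congr rfl fun i _ => ?_
  have hi := i.isLt
  have h1 : ((⟨(i:ℕ), by omega⟩ : Fin (2*n+1)) : ℕ) ≠ 2*n := by
    simp only [Fin.val_mk]; omega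
  have h2 : ((⟨(i:ℕ)+n, by omega⟩ : Fin (2*n+1)) : ℕ) ≠ 2*n := by
    simp only [Fin.val_mk]; omega
  rw [hx _ h1, hx _ h2, hy _ h1, hy _ h2]

lemma bform_neg_self (n : ℕ) (z : Fin (2*n+1) → ℝ) : bform n z (-z) = 0 := by
  unfold bform
  apply Finset.sum_eq_zero
  intro i _
  simp only [Pi.neg_apply]
  ring

lemma bform_skew (n : ℕ) (x y : Fin (2*n+1) → ℝ) : bform n y x = - bform n x y := by
  have : bform n y x + bform n x y = 0 := by
    unfold bform
    rw [← Finset.sum_add_distrib]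
    apply Finset.sum_eq_zero
    intro i _
    ring
  linarith

/-- The central vector with last coordinate `c`. -/
def eVec (n : ℕ) (c : ℝ) : Fin (2*n+1) → ℝ := fun j => if (j:ℕ) = 2*n then c else 0

lemma eVec_mem_of_ratio {n : ℕ} {S : Set (Fin (2*n+1) → ℝ)} (hS : IsHomSubgroup n S)
    {c d : ℝ} (hmem : eVec n c ∈ S) (h : 0 < d / c) : eVec n d ∈ S := by
  have hc : c ≠ 0 := by
    intro hc0; rw [hc0, div_zero] at h; exact lt_irrefl 0 h
  set t : ℝ := Real.sqrt (d / c) with ht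
  have htpos : 0 < t := Real.sqrt_pos.mpr h
  have hdm := hS.dil_mem t htpos _ hmem
  have heq : hdil n t (eVec n c) = eVec n d := by
    funext j
    rw [hdil_apply]
    by_cases hj : (j:ℕ) = 2*n
    · simp only [eVec, hj, if_pos]
      rw [ht, Real.sq_sqrt h.le, div_mul_cancel₀ _ hc]
    · simp [eVec, hj]
  rwa [heq] at hdm

lemma h2_subset_of_eVec {n : ℕ} {S : Set (Fin (2*n+1) → ℝ)} (hS : IsHomSubgroup n S)
    {c : ℝ} (hc : c ≠ 0) (hmem : eVec n c ∈ S) : H2set n ⊆ S := by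
  intro z hz
  set d : ℝ := z ⟨2*n, by omega⟩ with hd
  have hzeq : z = eVec n d := by
    funext j
    by_cases hj : (j:ℕ) = 2*n
    · have : j = (⟨2*n, by omega⟩ : Fin (2*n+1)) := Fin.ext hj
      rw [this]
      simp [eVec, hd]
    · simp [eVec, hj, hz j hj]
  by_cases hdz : d = 0
  · have : z = 0 := by
      rw [hzeq, hdz]; funext j; by_cases hj : (j:ℕ) = 2*n <;> simp [eVec, hj]
    rw [this]; exact hS.zero_mem
  · rw [hzeq]
    rcases (div_ne_zero hdz hc).lt_or_gt with hlt | hgt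
    · have hneg : eVec n (-c) ∈ S := by
        have : eVec n (-c) = -(eVec n c) := by
          funext j; by_cases hj : (j:ℕ) = 2*n <;> simp [eVec, hj]
        rw [this]; exact hS.neg_mem _ hmem
      have : 0 < d / (-c) := by rw [div_neg]; linarith
      exact eVec_mem_of_ratio hS hneg this
    · exact eVec_mem_of_ratio hS hmem hgt

/-- Key dichotomy: a homogeneous subgroup either contains the center or is horizontal. -/
lemma homSubgroup_dichotomy {n : ℕ} {S : Set (Fin (2*n+1) → ℝ)} (hS : IsHomSubgroup n S) :
    H2set n ⊆ S ∨ S ⊆ H1set n := by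
  by_cases hb : ∀ x ∈ S, ∀ y ∈ S, bform n x y = 0
  · -- the form vanishes on S: group operation restricted to S is addition
    have sub_mem : ∀ x ∈ S, ∀ y ∈ S, x - y ∈ S := by
      intro x hx y hy
      have hny : -y ∈ S := hS.neg_mem y hy
      have h1 := hS.mul_mem x hx (-y) hny
      have heq : hmul n x (-y) = x - y := by
        funext j
        rw [hmul_apply]
        by_cases hj : (j:ℕ) = 2*n
        · rw [if_pos hj, hb x hx (-y) hny]
          simp; ring
        · rw [if_neg hj]
          simp; ring
      rwa [heq] at h1
    by_cases hT : ∃ x ∈ S, x ⟨2*n, by omega⟩ ≠ 0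
    · left
      obtain ⟨x, hx, hxT⟩ := hT
      have h2x : hdil n 2 x ∈ S := hS.dil_mem 2 (by norm_num) x hx
      have hv : (hdil n 2 x - x) - x ∈ S := sub_mem _ (sub_mem _ h2x x hx) x hx
      have heq : (hdil n 2 x - x) - x = eVec n (2 * x ⟨2*n, by omega⟩) := by
        funext j
        simp only [Pi.sub_apply, hdil_apply, eVec]
        by_cases hj : (j:ℕ) = 2*n
        · have hjT : j = (⟨2*n, by omega⟩ : Fin (2*n+1)) := Fin.ext hj
          rw [if_pos hj, if_pos hj, hjT]
          ring
        · rw [if_neg hj, if_neg hj]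
          ring
      rw [heq] at hv
      exact h2_subset_of_eVec hS (mul_ne_zero two_ne_zero hxT) hv
    · right
      push_neg at hT
      intro x hx
      exact hT x hx
  · -- the form is nonzero somewhere on S: the center lies in S
    left
    push_neg at hb
    obtain ⟨x, hx, y, hy, hxy⟩ := hb
    have hp : hmul n x y ∈ S := hS.mul_mem x hx y hy
    have hq : -(hmul n y x) ∈ S := hS.neg_mem _ (hS.mul_mem y hy x hx)
    have hr : hmul n (hmul n x y) (-(hmul n y x)) ∈ S := hS.mul_mem _ hp _ hq
    have hbz : bform n (hmul n x y) (-(hmul n y x)) = 0 := by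
      have h1 : bform n (hmul n x y) (-(hmul n y x)) = bform n (hmul n x y) (-(hmul n x y)) := by
        apply bform_congr
        · intro j _; rfl
        · intro j hj
          simp only [Pi.neg_apply, hmul_apply, if_neg hj]
          ring
      rw [h1, bform_neg_self]
    have hre : hmul n (hmul n x y) (-(hmul n y x)) = eVec n (bform n x y) := by
      funext j
      rw [hmul_apply]
      simp only [Pi.neg_apply, hmul_apply, eVec]
      by_cases hj : (j:ℕ) = 2*n
      · rw [if_pos hj, if_pos hj, if_pos hj, if_pos hj, hbz, bform_skew n x y]
        ring
      · rw [if_neg hj, if_neg hj, if_neg hj, if_neg hj]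
        ring
    rw [hre] at hr
    exact h2_subset_of_eVec hS hxy hr

lemma eVec_one_mem_H2 (n : ℕ) : eVec n 1 ∈ H2set n := by
  intro j hj
  simp [eVec, hj]

/-- If `W` and `V` are homogeneous subgroups of `H^n` with `H^n = WV` and `W ∩ V = {0}`,
then one of them is vertical (contains `H_2`) and the other is horizontal
(contained in `H_1`). -/
theorem stmt_8 (n : ℕ) (W V : Set (Fin (2*n+1) → ℝ))
    (hW : IsHomSubgroup n W) (hV : IsHomSubgroup n V)
    (hWV : ∀ x, ∃ w ∈ W, ∃ v ∈ V, x = hmul n w v) (hcap : W ∩ V = {0}) :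
    (H2set n ⊆ W ∧ V ⊆ H1set n) ∨ (H2set n ⊆ V ∧ W ⊆ H1set n) := by
  rcases homSubgroup_dichotomy hW with hW2 | hW1
  · rcases homSubgroup_dichotomy hV with hV2 | hV1
    · -- both contain the center: contradiction with trivial intersection
      exfalso
      have h1 : eVec n 1 ∈ W ∩ V := ⟨hW2 (eVec_one_mem_H2 n), hV2 (eVec_one_mem_H2 n)⟩
      rw [hcap] at h1
      have := congrFun h1 ⟨2*n, by omega⟩
      simp [eVec] at this
    · exact Or.inl ⟨hW2, hV1⟩
  · rcases homSubgroup_dichotomy hV with hV2 | hV1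
    · exact Or.inr ⟨hV2, hW1⟩
    · -- both horizontal: the center element is not a product, contradiction
      exfalso
      obtain ⟨w, hw, v, hv, hwv⟩ := hWV (eVec n 1)
      have hwT : w ⟨2*n, by omega⟩ = 0 := hW1 hw
      have hvT : v ⟨2*n, by omega⟩ = 0 := hV1 hv
      have hvw : ∀ j : Fin (2*n+1), (j:ℕ) ≠ 2*n → v j = (-w) j := by
        intro j hj
        have := congrFun hwv j
        rw [hmul_apply, if_neg hj] at this
        simp only [eVec, if_neg hj] at this
        simp only [Pi.neg_apply]
        linarith
      have hbz : bform n w v = 0 := by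
        rw [bform_congr (fun j _ => rfl) hvw, bform_neg_self]
      have := congrFun hwv ⟨2*n, by omega⟩
      rw [hmul_apply] at this
      simp only [eVec, Fin.val_mk, if_pos rfl] at this
      rw [hwT, hvT, hbz] at this
      norm_num at this
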